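/- (Vanishing moments of m-th derivatives of order-2m B-splines.) For 1 ≤ k ≤ n−m let g_k : ℝ → ℝ be the spline g_k(y) = Σ_{j=1}^{n} (D_m^T D_{m+1}^T ⋯ D_{2m−1}^T)_{j,k} N_{m,j}(y) (this function coincides with the m-th derivative of the order-2m B-spline N_{2m,k} wherever the latter exists). Then ∫_a^b y^ν g_k(y) dy = 0 for every integer 0 ≤ ν ≤ m−1; equivalently, ∫_a^b p(y) g_k(y) dy = 0 for every polynomial p of degree at most m−1. -/

import Mathlib

open scoped BigOperators
open MeasureTheory Matrix

noncomputable def omegaB (θ : ℕ → ℝ) (j k : ℕ) (x : ℝ) : ℝ :=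
  if θ k < θ (k + j) then (x - θ k) / (θ (k + j) - θ k) else 0

noncomputable def Nspl (θ : ℕ → ℝ) : ℕ → ℕ → ℝ → ℝ
  | 0, _, _ => 0
  | 1, k, x => if θ k ≤ x ∧ x < θ (k + 1) then 1 else 0
  | j + 2, k, x =>
      omegaB θ (j + 1) k x * Nspl θ (j + 1) k x
        + (1 - omegaB θ (j + 1) (k + 1) x) * Nspl θ (j + 1) (k + 1) x

noncomputable def Gram (θ : ℕ → ℝ) (a b : ℝ) (m n : ℕ) : Matrix (Fin n) (Fin n) ℝ :=
  Matrix.of fun j k => ∫ x in a..b, Nspl θ m (j.1 + 1) x * Nspl θ m (k.1 + 1) x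

noncomputable def Dmat (θ : ℕ → ℝ) (ord p q : ℕ) : Matrix (Fin p) (Fin q) ℝ :=
  Matrix.of fun k j =>
    if j.1 = k.1 then (ord : ℝ) / (θ (k.1 + 1 + ord) - θ (k.1 + 1))
    else if j.1 = k.1 + 1 then -((ord : ℝ) / (θ (k.1 + 2 + ord) - θ (k.1 + 2)))
    else 0

noncomputable def Dprod (θ : ℕ → ℝ) (m n : ℕ) : (ν : ℕ) → Matrix (Fin (n - ν - 1)) (Fin n) ℝ
  | 0 => Dmat θ m (n - 1) n
  | ν + 1 => Dmat θ (m + ν + 1) (n - (ν + 1) - 1) (n - ν - 1) * Dprod θ m n ν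

noncomputable def DprodFull (θ : ℕ → ℝ) (m n : ℕ) (hm : 1 ≤ m) :
    Matrix (Fin (n - m)) (Fin n) ℝ :=
  Matrix.reindex (finCongr (by omega : n - (m - 1) - 1 = n - m)) (Equiv.refl _)
    (Dprod θ m n (m - 1))

noncomputable def knotMult (θ : ℕ → ℝ) (N ℓ : ℕ) : ℕ :=
  ((Finset.Icc 1 N).filter fun i => θ i = θ ℓ).card

structure IsOpenKnot (θ : ℕ → ℝ) (a b : ℝ) (m n : ℕ) : Prop where
  mono : ∀ i, 1 ≤ i → i < n + m → θ i ≤ θ (i + 1)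
  left : ∀ i, 1 ≤ i → i ≤ m → θ i = a
  right : ∀ i, n + 1 ≤ i → i ≤ n + m → θ i = b
  intMult : ∀ k, m + 1 ≤ k → k ≤ n → knotMult θ (n + m) k ≤ m - 1

noncomputable def esymmF (r : ℕ) (s : Finset ℕ) (y : ℕ → ℝ) : ℝ :=
  ∑ t ∈ s.powersetCard r, ∏ i ∈ t, y i

noncomputable def cVec (θ : ℕ → ℝ) (m n ℓ ν : ℕ) : Fin n → ℝ :=
  fun k =>
    if k.1 + 1 ≤ ℓ - m + ν then
      esymmF (m - 1 - ν) (Finset.Icc (k.1 + 2) (k.1 + m)) (fun i => θ ℓ - θ i)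
        / ((m - 1).choose ν : ℝ)
    else 0

noncomputable def Fpoly (ν : ℕ) (s : Finset ℕ) (y : ℕ → ℝ) : ℝ :=
  (2 ^ ν * (ν.factorial : ℝ))⁻¹ *
    ∑ f ∈ (Fintype.piFinset fun _ : Fin (2 * ν) => s).filter (fun f => Function.Injective f),
      ∏ i : Fin ν,
        (y (f ⟨i.1, by have := i.2; omega⟩) - y (f ⟨ν + i.1, by have := i.2; omega⟩)) ^ 2

noncomputable def uCoef (θ : ℕ → ℝ) (m ν k : ℕ) : ℝ :=
  ((m + ν : ℕ) : ℝ) / (θ (k + m + ν) - θ k) * Fpoly ν (Finset.Icc (k + 1) (k + m + ν - 1)) θ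

noncomputable def Smat (θ : ℕ → ℝ) (m n : ℕ) : ℕ → Matrix (Fin n) (Fin n) ℝ
  | 0 => Matrix.diagonal fun k : Fin n => uCoef θ m 0 (k.1 + 1)
  | ν + 1 => Smat θ m n ν +
      (Dprod θ m n ν)ᵀ *
        Matrix.diagonal (fun k : Fin (n - ν - 1) => uCoef θ m (ν + 1) (k.1 + 1)) *
        Dprod θ m n ν
noncomputable def alpha2 (θ : ℕ → ℝ) (n j : ℕ) : ℝ :=
  if 1 ≤ j ∧ j ≤ n - 1 then (θ (j + 2) - θ (j + 1)) ^ 2 / (θ (j + 3) - θ j) else 0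

noncomputable def beta2 (θ : ℕ → ℝ) (j : ℕ) : ℝ :=
  -(2 * (θ (j + 2) - θ (j + 1)) ^ 2) /
    ((θ (j + 2) - θ j) * (θ (j + 3) - θ j) * (θ (j + 3) - θ (j + 1)))

/-- The approximate-dual matrix `S` for `m = 2` (symmetric tridiagonal). -/
noncomputable def S2 (θ : ℕ → ℝ) (n : ℕ) : Matrix (Fin n) (Fin n) ℝ :=
  Matrix.of fun i k =>
    if k.1 = i.1 then
      2 / (θ (i.1 + 3) - θ (i.1 + 1))
        + 2 * (alpha2 θ n i.1 + alpha2 θ n (i.1 + 1)) / (θ (i.1 + 3) - θ (i.1 + 1)) ^ 2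
    else if k.1 = i.1 + 1 then beta2 θ (i.1 + 1)
    else if i.1 = k.1 + 1 then beta2 θ (k.1 + 1)
    else 0

/-- The explicit matrix `Z` for `m = 2` (lower triangular, three nonzero diagonals). -/
noncomputable def Zmat2 (θ : ℕ → ℝ) (n : ℕ) : Matrix (Fin n) (Fin (n - 2)) ℝ :=
  Matrix.of fun i j =>
    if i.1 = j.1 then
      (θ (j.1 + 3) - θ (j.1 + 2)) * (θ (j.1 + 4) - θ (j.1 + 3)) ^ 2
        / (18 * (θ (j.1 + 4) - θ (j.1 + 2)))
    else if i.1 = j.1 + 1 then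
      -((θ (j.1 + 3) - θ (j.1 + 2)) * (θ (j.1 + 4) - θ (j.1 + 3)) / 18)
    else if i.1 = j.1 + 2 then
      (θ (j.1 + 3) - θ (j.1 + 2)) ^ 2 * (θ (j.1 + 4) - θ (j.1 + 3))
        / (18 * (θ (j.1 + 4) - θ (j.1 + 2)))
    else 0

/-- The approximate-dual matrix `S = U₀ + D₃ᵀ U₁ D₃ + D₃ᵀ D₄ᵀ U₂ D₄ D₃` for `m = 3`. -/
noncomputable def S3 (θ : ℕ → ℝ) (n : ℕ) : Matrix (Fin n) (Fin n) ℝ :=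
  Matrix.diagonal (fun k : Fin n => uCoef θ 3 0 (k.1 + 1))
    + (Dmat θ 3 (n - 1) n)ᵀ *
        Matrix.diagonal (fun k : Fin (n - 1) => uCoef θ 3 1 (k.1 + 1)) * Dmat θ 3 (n - 1) n
    + (Dmat θ 4 (n - 2) (n - 1) * Dmat θ 3 (n - 1) n)ᵀ *
        Matrix.diagonal (fun k : Fin (n - 2) => uCoef θ 3 2 (k.1 + 1)) *
        (Dmat θ 4 (n - 2) (n - 1) * Dmat θ 3 (n - 1) n)

/-- vanishing moments of `m`-th derivatives of order-`2m` B-splines.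
For `1 ≤ k ≤ n-m` the spline `g_k(y) = Σ_j (D_mᵀ⋯D_{2m-1}ᵀ)_{j,k} N_{m,j}(y)` satisfies
`∫_a^b y^ν g_k(y) dy = 0` for `0 ≤ ν ≤ m-1`; equivalently `∫_a^b p(y) g_k(y) dy = 0` for
every polynomial `p` of degree at most `m-1`. -/
-- monotonicity helper
lemma thle (θ : ℕ → ℝ) {T : ℕ} (hmono : ∀ i, 1 ≤ i → i < T → θ i ≤ θ (i+1))
    {i j : ℕ} (h1 : 1 ≤ i) (hij : i ≤ j) (hj : j ≤ T) : θ i ≤ θ j := by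
  induction j with
  | zero => omega
  | succ j ih =>
    rcases Nat.eq_or_lt_of_le hij with h | h
    · rw [h]
    · exact le_trans (ih (by omega) (by omega)) (hmono j (by omega) (by omega))

lemma Nspl_zero (θ : ℕ → ℝ) {T : ℕ} (hmono : ∀ i, 1 ≤ i → i < T → θ i ≤ θ (i+1)) :
    ∀ r κ x, 1 ≤ κ → κ + r ≤ T → (x < θ κ ∨ θ (κ + r) ≤ x) → Nspl θ r κ x = 0 := by
  intro r
  induction r using Nat.strong_induction_on with
  | _ r ih =>
    match r with
    | 0 => intro κ x _ _ _; rfl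
    | 1 =>
      intro κ x h1 h2 hx
      simp only [Nspl]
      rcases hx with hx | hx
      · rw [if_neg]; push_neg; intro h; exact absurd h (not_le.2 hx)
      · rw [if_neg]; push_neg; intro _; exact hx
    | (j+2) =>
      intro κ x h1 h2 hx
      have e1 : Nspl θ (j+1) κ x = 0 := by
        apply ih (j+1) (by omega) κ x h1 (by omega)
        rcases hx with hx | hx
        · exact Or.inl hx
        · exact Or.inr (le_trans (thle θ hmono (by omega) (by omega) (by omega)) hx)
      have e2 : Nspl θ (j+1) (κ+1) x = 0 := by
        apply ih (j+1) (by omega) (κ+1) x (by omega) (by omega)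
        rcases hx with hx | hx
        · exact Or.inl (lt_of_lt_of_le hx (thle θ hmono h1 (by omega) (by omega)))
        · refine Or.inr ?_
          rw [show κ + 1 + (j+1) = κ + (j+2) from by omega]
          exact hx
      simp [Nspl, e1, e2]

lemma omegaB_cont (θ : ℕ → ℝ) (j k : ℕ) : Continuous (omegaB θ j k) := by
  unfold omegaB
  split_ifs
  · exact (continuous_id.sub continuous_const).div_const _
  · exact continuous_const

lemma Nspl_meas (θ : ℕ → ℝ) : ∀ r κ, Measurable (Nspl θ r κ) := by
  intro r
  induction r using Nat.strong_induction_on with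
  | _ r ih =>
    match r with
    | 0 => intro κ; exact measurable_const
    | 1 =>
      intro κ
      have : Nspl θ 1 κ = Set.indicator (Set.Ico (θ κ) (θ (κ+1))) (fun _ => (1:ℝ)) := by
        funext x
        simp only [Nspl, Set.indicator, Set.mem_Ico]
      rw [this]
      exact (measurable_const.indicator measurableSet_Ico)
    | (j+2) =>
      intro κ
      exact (((omegaB_cont θ (j+1) κ).measurable).mul (ih (j+1) (by omega) κ)).add
        (((continuous_const.sub (omegaB_cont θ (j+1) (κ+1))).measurable).mul
          (ih (j+1) (by omega) (κ+1)))

lemma Nspl_bound (θ : ℕ → ℝ) {T : ℕ} (hmono : ∀ i, 1 ≤ i → i < T → θ i ≤ θ (i+1)) :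
    ∀ r κ x, 1 ≤ κ → κ + r ≤ T → |Nspl θ r κ x| ≤ 2 ^ r := by
  intro r
  induction r using Nat.strong_induction_on with
  | _ r ih =>
    match r with
    | 0 => intro κ x _ _; simp [Nspl]
    | 1 =>
      intro κ x _ _
      simp only [Nspl]
      split_ifs <;> simp
    | (j+2) =>
      intro κ x h1 h2
      simp only [Nspl]
      have b1 : |omegaB θ (j+1) κ x * Nspl θ (j+1) κ x| ≤ 2 ^ (j+1) := by
        rcases eq_or_ne (Nspl θ (j+1) κ x) 0 with h | h
        · rw [h, mul_zero, abs_zero]; positivity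
        · have hsup : θ κ ≤ x ∧ x < θ (κ + (j+1)) := by
            by_contra hc
            push_neg at hc
            apply h
            apply Nspl_zero θ hmono (j+1) κ x h1 (by omega)
            rcases lt_or_ge x (θ κ) with h' | h'
            · exact Or.inl h'
            · exact Or.inr (hc h')
          have hw : |omegaB θ (j+1) κ x| ≤ 1 := by
            unfold omegaB
            split_ifs with hg
            · rw [abs_div, abs_of_nonneg (by linarith [hsup.1] : (0:ℝ) ≤ x - θ κ),
                abs_of_pos (by linarith : (0:ℝ) < θ (κ + (j+1)) - θ κ)]
              rw [div_le_one (by linarith)]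
              linarith [hsup.2]
            · simp
          calc |omegaB θ (j+1) κ x * Nspl θ (j+1) κ x|
              = |omegaB θ (j+1) κ x| * |Nspl θ (j+1) κ x| := abs_mul _ _
            _ ≤ 1 * 2 ^ (j+1) := by
                apply mul_le_mul hw (ih (j+1) (by omega) κ x h1 (by omega)) (abs_nonneg _) zero_le_one
            _ = 2 ^ (j+1) := one_mul _
      have b2 : |(1 - omegaB θ (j+1) (κ+1) x) * Nspl θ (j+1) (κ+1) x| ≤ 2 ^ (j+1) := by
        rcases eq_or_ne (Nspl θ (j+1) (κ+1) x) 0 with h | h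
        · rw [h, mul_zero, abs_zero]; positivity
        · have hsup : θ (κ+1) ≤ x ∧ x < θ (κ + 1 + (j+1)) := by
            by_contra hc
            push_neg at hc
            apply h
            apply Nspl_zero θ hmono (j+1) (κ+1) x (by omega) (by omega)
            rcases lt_or_ge x (θ (κ+1)) with h' | h'
            · exact Or.inl h'
            · exact Or.inr (hc h')
          have hw : |1 - omegaB θ (j+1) (κ+1) x| ≤ 1 := by
            unfold omegaB
            split_ifs with hg
            · have hd : (0:ℝ) < θ (κ + 1 + (j+1)) - θ (κ+1) := by linarith
              rw [abs_le]
              constructor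
              · have : (x - θ (κ+1)) / (θ (κ + 1 + (j+1)) - θ (κ+1)) ≤ 1 + 1 := by
                  rw [div_le_iff₀ hd]; nlinarith [hsup.2]
                linarith
              · have : (0:ℝ) ≤ (x - θ (κ+1)) / (θ (κ + 1 + (j+1)) - θ (κ+1)) := by
                  apply div_nonneg <;> linarith [hsup.1]
                linarith
            · simp
          calc |(1 - omegaB θ (j+1) (κ+1) x) * Nspl θ (j+1) (κ+1) x|
              = |1 - omegaB θ (j+1) (κ+1) x| * |Nspl θ (j+1) (κ+1) x| := abs_mul _ _
            _ ≤ 1 * 2 ^ (j+1) := by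
                apply mul_le_mul hw (ih (j+1) (by omega) (κ+1) x (by omega) (by omega))
                  (abs_nonneg _) zero_le_one
            _ = 2 ^ (j+1) := one_mul _
      calc |omegaB θ (j+1) κ x * Nspl θ (j+1) κ x
            + (1 - omegaB θ (j+1) (κ+1) x) * Nspl θ (j+1) (κ+1) x|
          ≤ |omegaB θ (j+1) κ x * Nspl θ (j+1) κ x|
            + |(1 - omegaB θ (j+1) (κ+1) x) * Nspl θ (j+1) (κ+1) x| := abs_add_le _ _
        _ ≤ 2 ^ (j+1) + 2 ^ (j+1) := add_le_add b1 b2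
        _ = 2 ^ (j+2) := by ring

-- right continuity
lemma Nspl_rc (θ : ℕ → ℝ) : ∀ r κ (x : ℝ), ContinuousWithinAt (Nspl θ r κ) (Set.Ici x) x := by
  intro r
  induction r using Nat.strong_induction_on with
  | _ r ih =>
    match r with
    | 0 => intro κ x; exact continuousWithinAt_const
    | 1 =>
      intro κ x
      have hEv : ∀ᶠ y in nhdsWithin x (Set.Ici x), Nspl θ 1 κ y = Nspl θ 1 κ x := by
        by_cases h1 : θ κ ≤ x
        · by_cases h2 : x < θ (κ+1)
          · have hm : Set.Ico x (θ (κ+1)) ∈ nhdsWithin x (Set.Ici x) := by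
              apply inter_mem_nhdsWithin
              exact Iio_mem_nhds h2
            filter_upwards [hm] with y hy
            simp only [Nspl]
            rw [if_pos ⟨le_trans h1 hy.1, hy.2⟩, if_pos ⟨h1, h2⟩]
          · filter_upwards [self_mem_nhdsWithin] with y hy
            simp only [Nspl]
            rw [if_neg (by push_neg; intro _; exact le_trans (not_lt.1 h2) hy),
              if_neg (by push_neg; intro _; exact not_lt.1 h2)]
        · have hm : {y | y < θ κ} ∈ nhdsWithin x (Set.Ici x) := by
            apply mem_nhdsWithin_of_mem_nhds
            exact Iio_mem_nhds (not_le.1 h1)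
          filter_upwards [hm] with y hy
          simp only [Nspl]
          rw [if_neg (by push_neg; intro h; exact absurd h (not_le.2 hy)),
            if_neg (by push_neg; intro h; exact absurd h h1)]
      exact continuousWithinAt_const.congr_of_eventuallyEq hEv rfl
    | (j+2) =>
      intro κ x
      simp only [Nspl]
      exact (((omegaB_cont θ (j+1) κ).continuousWithinAt).mul (ih (j+1) (by omega) κ x)).add
        (((continuous_const.sub (omegaB_cont θ (j+1) (κ+1))).continuousWithinAt).mul
          (ih (j+1) (by omega) (κ+1) x))

lemma omegaB_self (θ : ℕ → ℝ) (j k : ℕ) : omegaB θ j k (θ k) = 0 := by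
  unfold omegaB; split_ifs <;> simp

-- value 1 at a knot of full multiplicity at the left of the window
lemma Nspl_val_one (θ : ℕ → ℝ) {T : ℕ} (hmono : ∀ i, 1 ≤ i → i < T → θ i ≤ θ (i+1)) :
    ∀ r κ, 1 ≤ κ → κ + r + 1 ≤ T → θ κ = θ (κ + r) → θ (κ + r) < θ (κ + r + 1) →
      Nspl θ (r+1) κ (θ κ) = 1 := by
  intro r
  induction r with
  | zero =>
    intro κ h1 h2 _ hlt
    simp only [Nspl]
    rw [if_pos ⟨le_refl _, by simpa using hlt⟩]
  | succ r ih =>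
    intro κ h1 h2 hrun hlt
    have hflat : ∀ i, κ ≤ i → i ≤ κ + r + 1 → θ i = θ κ := by
      intro i hi1 hi2
      have l1 : θ κ ≤ θ i := thle θ hmono h1 hi1 (by omega)
      have l2 : θ i ≤ θ (κ + (r+1)) := thle θ hmono (by omega) (by omega) (by omega)
      rw [← hrun] at l2
      linarith
    have e1 : θ (κ+1) = θ κ := hflat (κ+1) (by omega) (by omega)
    show omegaB θ (r+1) κ (θ κ) * Nspl θ (r+1) κ (θ κ)
        + (1 - omegaB θ (r+1) (κ+1) (θ κ)) * Nspl θ (r+1) (κ+1) (θ κ) = 1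
    rw [omegaB_self]
    have hw1 : omegaB θ (r+1) (κ+1) (θ κ) = 0 := by
      rw [← e1]; exact omegaB_self θ (r+1) (κ+1)
    have hv : Nspl θ (r+1) (κ+1) (θ (κ+1)) = 1 := by
      apply ih (κ+1) (by omega) (by omega)
      · rw [e1, hrun]; congr 1; omega
      · rw [show κ + 1 + r = κ + (r+1) from by omega]
        exact hlt
    rw [e1] at hv
    rw [hw1, hv]
    ring

-- left-limit power formula near a knot of full multiplicity at right of window
lemma Nspl_LL (θ : ℕ → ℝ) {T : ℕ} (hmono : ∀ i, 1 ≤ i → i < T → θ i ≤ θ (i+1)) :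
    ∀ r κ, 1 ≤ r → 1 ≤ κ → κ + r ≤ T → θ κ < θ (κ+1) → θ (κ+1) = θ (κ+r) →
      ∀ y, θ κ ≤ y → y < θ (κ+1) →
        Nspl θ r κ y = ((y - θ κ)/(θ (κ+1) - θ κ))^(r-1) := by
  intro r
  induction r with
  | zero => omega
  | succ r ih =>
    intro κ _ h1 h2 hlt hrun y hy1 hy2
    match r, ih with
    | 0, _ =>
      simp only [Nspl]
      rw [if_pos ⟨hy1, hy2⟩]
      norm_num
    | (r+1), ih =>
      show omegaB θ (r+1) κ y * Nspl θ (r+1) κ y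
          + (1 - omegaB θ (r+1) (κ+1) y) * Nspl θ (r+1) (κ+1) y = _
      have hz : Nspl θ (r+1) (κ+1) y = 0 := by
        apply Nspl_zero θ hmono (r+1) (κ+1) y (by omega) (by omega) (Or.inl hy2)
      have hre : θ (κ + (r+1)) = θ (κ+1) := by
        have l1 : θ (κ+1) ≤ θ (κ+(r+1)) := thle θ hmono (by omega) (by omega) (by omega)
        have l2 : θ (κ+(r+1)) ≤ θ (κ+(r+2)) := thle θ hmono (by omega) (by omega) (by omega)
        rw [show κ + (r+2) = κ + (r+1) + 1 from by omega] at l2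
        rw [hrun, show κ + (r+1) + 1 = κ + (r + 2) from by omega] at *
        linarith [hrun]
      have hw : omegaB θ (r+1) κ y = (y - θ κ)/(θ (κ+1) - θ κ) := by
        unfold omegaB
        rw [if_pos (by rw [hre]; exact hlt), hre]
      have hih : Nspl θ (r+1) κ y = ((y - θ κ)/(θ (κ+1) - θ κ))^r := by
        have := ih κ (by omega) h1 (by omega) hlt (by rw [hre]) y hy1 hy2
        simpa using this
      rw [hz, hw, hih]
      rw [show (r+1+1-1) = r + 1 from by omega]
      ring

lemma Nspl_one_eventuallyEq (θ : ℕ → ℝ) (κ : ℕ) (x : ℝ) (hx1 : x ≠ θ κ) (hx2 : x ≠ θ (κ+1)) :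
    ∀ᶠ y in nhds x, Nspl θ 1 κ y = Nspl θ 1 κ x := by
  have h1 : ∀ᶠ y in nhds x, (θ κ ≤ y ↔ θ κ ≤ x) := by
    rcases lt_or_gt_of_ne hx1 with h | h
    · filter_upwards [Iio_mem_nhds h] with y hy
      exact iff_of_false (not_le.2 hy) (not_le.2 h)
    · filter_upwards [Ioi_mem_nhds h] with y hy
      exact iff_of_true (le_of_lt hy) (le_of_lt h)
  have h2 : ∀ᶠ y in nhds x, (y < θ (κ+1) ↔ x < θ (κ+1)) := by
    rcases lt_or_gt_of_ne hx2 with h | h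
    · filter_upwards [Iio_mem_nhds h] with y hy
      exact iff_of_true hy h
    · filter_upwards [Ioi_mem_nhds h] with y hy
      exact iff_of_false (not_lt.2 (le_of_lt hy)) (not_lt.2 (le_of_lt h))
  filter_upwards [h1, h2] with y e1 e2
  simp only [Nspl]
  rw [if_congr (and_congr e1 e2) rfl rfl]

lemma Nspl_contAt (θ : ℕ → ℝ) {T : ℕ} (hmono : ∀ i, 1 ≤ i → i < T → θ i ≤ θ (i+1)) :
    ∀ s κ (x : ℝ), 1 ≤ κ → κ + s + 1 ≤ T →
      (θ κ = θ (κ + s) → x ≠ θ κ) → (θ (κ+1) = θ (κ + s + 1) → x ≠ θ (κ+1)) →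
      ContinuousAt (Nspl θ (s+1) κ) x := by
  intro s
  induction s with
  | zero =>
    intro κ x h1 h2 hx1 hx2
    have hEv : Nspl θ 1 κ =ᶠ[nhds x] (fun _ => Nspl θ 1 κ x) :=
      Nspl_one_eventuallyEq θ κ x (hx1 (by norm_num)) (hx2 (by norm_num))
    exact continuousAt_const.congr hEv.symm
  | succ s ih =>
    intro κ x h1 h2 hx1 hx2
    have hrec : Nspl θ (s+2) κ = fun y => omegaB θ (s+1) κ y * Nspl θ (s+1) κ y
        + (1 - omegaB θ (s+1) (κ+1) y) * Nspl θ (s+1) (κ+1) y := rfl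
    rw [hrec]
    by_cases hB : θ (κ+1) = θ (κ+s+1) ∧ x = θ (κ+1)
    · obtain ⟨hB1, hB2⟩ := hB
      have hκlt : θ κ < θ (κ+1) := by
        rcases eq_or_lt_of_le (hmono κ h1 (by omega)) with h | h
        · exfalso
          apply hx1 (by rw [show κ+(s+1) = κ+s+1 from by omega, h, hB1])
          rw [hB2, ← h]
        · exact h
      have hxlt : x < θ (κ+s+2) := by
        rcases eq_or_lt_of_le (thle θ hmono (i := κ+1) (j := κ+s+2) (by omega) (by omega) (by omega)) with h | h
        · exact absurd hB2 (hx2 h)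
        · rw [hB2]; exact h
      have hBx : Nspl θ (s+1) (κ+1) x = 1 := by
        rw [hB2]
        apply Nspl_val_one θ hmono s (κ+1) (by omega) (by omega)
        · rw [show κ+1+s = κ+s+1 from by omega]; exact hB1
        · rw [show κ+1+s = κ+s+1 from by omega, show κ+s+1+1 = κ+s+2 from by omega]
          rw [← hB1, ← hB2]; exact hxlt
      have hAx : Nspl θ (s+1) κ x = 0 := by
        apply Nspl_zero θ hmono (s+1) κ x h1 (by omega)
        exact Or.inr (by rw [show κ+(s+1) = κ+s+1 from by omega, ← hB1, ← hB2])
      have hw2x : omegaB θ (s+1) (κ+1) x = 0 := by rw [hB2]; exact omegaB_self θ _ _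
      rw [continuousAt_iff_continuous_left_right]
      constructor
      · -- left
        set g : ℝ → ℝ := fun y => omegaB θ (s+1) κ y * ((y - θ κ)/(x - θ κ))^s with hg
        have hgc : Continuous g :=
          (omegaB_cont θ (s+1) κ).mul (((continuous_id.sub continuous_const).div_const _).pow s)
        have hgx : g x = 1 := by
          have hxθ : x - θ κ ≠ 0 := by rw [hB2]; exact ne_of_gt (by linarith)
          have : omegaB θ (s+1) κ x = 1 := by
            unfold omegaB
            rw [if_pos (by rw [show κ+(s+1) = κ+s+1 from by omega, ← hB1, ← hB2]; rw [hB2]; exact hκlt)]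
            rw [show κ+(s+1) = κ+s+1 from by omega, ← hB1, ← hB2]
            field_simp
          show omegaB θ (s+1) κ x * ((x - θ κ)/(x - θ κ))^s = 1
          rw [this, div_self hxθ]; norm_num
        apply ContinuousWithinAt.congr_of_eventuallyEq hgc.continuousAt.continuousWithinAt
        · have hm : {y | θ κ < y} ∈ nhdsWithin x (Set.Iic x) := by
            apply mem_nhdsWithin_of_mem_nhds
            apply Ioi_mem_nhds; rw [hB2]; exact hκlt
          filter_upwards [hm, self_mem_nhdsWithin] with y hy1 hy2
          rcases eq_or_lt_of_le (Set.mem_Iic.mp hy2) with he | hlt'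
          · rw [he, hgx, hAx, hBx, hw2x]; ring
          · have hBy : Nspl θ (s+1) (κ+1) y = 0 :=
              Nspl_zero θ hmono (s+1) (κ+1) y (by omega) (by omega) (Or.inl (by rw [← hB2]; exact hlt'))
            have hAy : Nspl θ (s+1) κ y = ((y - θ κ)/(θ (κ+1) - θ κ))^s := by
              have := Nspl_LL θ hmono (s+1) κ (by omega) h1 (by omega) hκlt
                (by rw [show κ+(s+1) = κ+s+1 from by omega]; exact hB1) y (le_of_lt hy1)
                (by rw [hB2] at hlt'; exact hlt')
              simpa using this
            rw [hAy, hBy]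
            show _ = omegaB θ (s+1) κ y * ((y - θ κ)/(x - θ κ))^s
            rw [hB2]
            ring
        · rw [hgx, hAx, hBx, hw2x]; ring
      · -- right
        have := Nspl_rc θ (s+2) κ x
        rw [hrec] at this; exact this
    · by_cases hC : θ (κ+2) = θ (κ+s+2) ∧ x = θ (κ+2)
      · obtain ⟨hC1, hC2⟩ := hC
        have hκlt : θ (κ+1) < x := by
          rcases eq_or_lt_of_le (thle θ hmono (i := κ+1) (j := κ+2) (by omega) (by omega) (by omega)) with h | h
          · exfalso
            exact hx2 (by rw [show κ+(s+1)+1 = κ+s+2 from by omega, h, hC1]) (by rw [hC2, ← h])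
          · rw [hC2]; exact h
        -- term1 continuous via IH
        have hterm1 : ContinuousAt (fun y => omegaB θ (s+1) κ y * Nspl θ (s+1) κ y) x := by
          apply ContinuousAt.mul (omegaB_cont θ (s+1) κ).continuousAt
          apply ih κ x h1 (by omega)
          · intro _; exact ne_of_gt (lt_of_le_of_lt (thle θ hmono h1 (by omega) (by omega)) hκlt)
          · intro _; exact ne_of_gt hκlt
        have hterm2 : ContinuousAt (fun y => (1 - omegaB θ (s+1) (κ+1) y) * Nspl θ (s+1) (κ+1) y) x := by
          have hBzero : ∀ y, x ≤ y → Nspl θ (s+1) (κ+1) y = 0 := by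
            intro y hy
            apply Nspl_zero θ hmono (s+1) (κ+1) y (by omega) (by omega)
            refine Or.inr ?_
            rw [show κ+1+(s+1) = κ+s+2 from by omega, ← hC1, ← hC2]; exact hy
          rw [continuousAt_iff_continuous_left_right]
          constructor
          · set g : ℝ → ℝ := fun y => (1 - omegaB θ (s+1) (κ+1) y) * ((y - θ (κ+1))/(x - θ (κ+1)))^s with hg
            have hgc : Continuous g :=
              (continuous_const.sub (omegaB_cont θ (s+1) (κ+1))).mul
                (((continuous_id.sub continuous_const).div_const _).pow s)
            have hw2x : omegaB θ (s+1) (κ+1) x = 1 := by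
              unfold omegaB
              rw [if_pos (by rw [show κ+1+(s+1) = κ+s+2 from by omega, ← hC1, ← hC2]; exact hκlt)]
              rw [show κ+1+(s+1) = κ+s+2 from by omega, ← hC1, ← hC2]
              exact div_self (sub_ne_zero.mpr (ne_of_gt hκlt))
            have hgx : g x = 0 := by
              show (1 - omegaB θ (s+1) (κ+1) x) * ((x - θ (κ+1))/(x - θ (κ+1)))^s = 0
              rw [hw2x]; ring
            refine ContinuousWithinAt.congr_of_eventuallyEq
              hgc.continuousAt.continuousWithinAt ?_ ?_
            · have hm : {y | θ (κ+1) < y} ∈ nhdsWithin x (Set.Iic x) :=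
                mem_nhdsWithin_of_mem_nhds (Ioi_mem_nhds hκlt)
              filter_upwards [hm, self_mem_nhdsWithin] with y hy1 hy2
              rcases eq_or_lt_of_le (Set.mem_Iic.mp hy2) with he | hlt'
              · rw [he, hgx, hBzero x (le_refl x)]; ring
              · have hBy : Nspl θ (s+1) (κ+1) y = ((y - θ (κ+1))/(θ (κ+2) - θ (κ+1)))^s := by
                  have := Nspl_LL θ hmono (s+1) (κ+1) (by omega) (by omega) (by omega)
                    (by rw [show κ+1+1 = κ+2 from by omega, ← hC2]; exact hκlt)
                    (by rw [show κ+1+1 = κ+2 from by omega, show κ+1+(s+1) = κ+s+2 from by omega, hC1])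
                    y (le_of_lt hy1) (by rw [show κ+1+1 = κ+2 from by omega, ← hC2]; exact hlt')
                  simpa [show κ+1+1 = κ+2 from by omega] using this
                rw [hBy]
                show _ = (1 - omegaB θ (s+1) (κ+1) y) * ((y - θ (κ+1))/(x - θ (κ+1)))^s
                rw [hC2]
            · rw [hgx, hBzero x (le_refl x)]; ring
          · apply ContinuousWithinAt.congr_of_eventuallyEq continuousWithinAt_const
            · filter_upwards [self_mem_nhdsWithin] with y hy
              rw [hBzero y hy, mul_zero]
            · rw [hBzero x (le_refl x), mul_zero]
        exact hterm1.add hterm2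
      · by_cases hA : θ κ = θ (κ+s) ∧ x = θ κ
        · obtain ⟨hA1, hA2⟩ := hA
          have hlt : θ κ < θ (κ+s+1) := by
            rcases eq_or_lt_of_le (thle θ hmono (i := κ) (j := κ+s+1) h1 (by omega) (by omega)) with h | h
            · exact absurd hA2 (hx1 h)
            · exact h
          have hterm2 : ContinuousAt (fun y => (1 - omegaB θ (s+1) (κ+1) y) * Nspl θ (s+1) (κ+1) y) x := by
            apply ContinuousAt.mul (continuous_const.sub (omegaB_cont θ (s+1) (κ+1))).continuousAt
            apply ih (κ+1) x (by omega) (by omega)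
            · intro h; rw [hA2]
              apply ne_of_lt
              rw [show κ+1+s = κ+s+1 from by omega] at h
              rw [h]; exact hlt
            · intro h
              rw [show κ+1+1 = κ+2 from by omega, show κ+1+s+1 = κ+s+2 from by omega] at h
              intro hxe
              rw [show κ+1+1 = κ+2 from by omega] at hxe
              have l1 : θ κ ≤ θ (κ+1) := hmono κ h1 (by omega)
              have l2 : θ (κ+1) ≤ θ (κ+2) := hmono (κ+1) (by omega) (by omega)
              have l3 : θ (κ+s+1) ≤ θ (κ+s+2) := hmono (κ+s+1) (by omega) (by omega)
              rw [hA2] at hxe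
              rw [← h, ← hxe] at l3
              linarith
          have hterm1 : ContinuousAt (fun y => omegaB θ (s+1) κ y * Nspl θ (s+1) κ y) x := by
            rw [continuousAt_iff_continuous_left_right]
            have hval : omegaB θ (s+1) κ x * Nspl θ (s+1) κ x = 0 := by
              rw [hA2, omegaB_self, zero_mul]
            constructor
            · apply ContinuousWithinAt.congr_of_eventuallyEq continuousWithinAt_const
              · filter_upwards [self_mem_nhdsWithin] with y hy
                rcases eq_or_lt_of_le (Set.mem_Iic.mp hy) with he | hlt'
                · rw [he, hval]
                · rw [Nspl_zero θ hmono (s+1) κ y h1 (by omega) (Or.inl (by rw [← hA2]; exact hlt')), mul_zero]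
              · rw [hval]
            · exact ((omegaB_cont θ (s+1) κ).continuousAt.continuousWithinAt).mul (Nspl_rc θ (s+1) κ x)
          exact hterm1.add hterm2
        · -- main case
          push_neg at hA hB hC
          have ht1 : ContinuousAt (Nspl θ (s+1) κ) x := by
            apply ih κ x h1 (by omega)
            · intro h; exact hA h
            · intro h; exact hB h
          have ht2 : ContinuousAt (Nspl θ (s+1) (κ+1)) x := by
            apply ih (κ+1) x (by omega) (by omega)
            · intro h; rw [show κ+1+s = κ+s+1 from by omega] at h; exact hB h
            · intro h; rw [show κ+1+1 = κ+2 from by omega, show κ+1+s+1 = κ+s+2 from by omega] at h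
              exact hC h
          exact (((omegaB_cont θ (s+1) κ).continuousAt).mul ht1).add
            (((continuous_const.sub (omegaB_cont θ (s+1) (κ+1))).continuousAt).mul ht2)

lemma omegaB_eq (θ : ℕ → ℝ) {j k : ℕ} (h : θ k < θ (k+j)) (x : ℝ) :
    omegaB θ j k x = (x - θ k)/(θ (k+j) - θ k) := by
  unfold omegaB; rw [if_pos h]

lemma omegaB_eq_zero (θ : ℕ → ℝ) {j k : ℕ} (h : ¬ θ k < θ (k+j)) (x : ℝ) :
    omegaB θ j k x = 0 := by
  unfold omegaB; rw [if_neg h]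

lemma omegaB_hasDerivAt (θ : ℕ → ℝ) (j k : ℕ) (x : ℝ) (hle : θ k ≤ θ (k+j)) :
    HasDerivAt (omegaB θ j k) (θ (k+j) - θ k)⁻¹ x := by
  unfold omegaB
  split_ifs with h
  · have : HasDerivAt (fun y : ℝ => (y - θ k)/(θ (k+j) - θ k)) ((1:ℝ)/(θ (k+j) - θ k)) x := by
      simpa using (((hasDerivAt_id x).sub_const (θ k)).div_const (θ (k+j) - θ k))
    simpa [one_div] using this
  · have he : θ (k+j) - θ k = 0 := by
      have : θ (k+j) = θ k := le_antisymm (not_lt.1 h) hle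
      rw [this]; ring
    rw [he, _root_.inv_zero]
    exact hasDerivAt_const x 0

set_option maxHeartbeats 1600000 in
lemma Nspl_hasDerivAt (θ : ℕ → ℝ) {T : ℕ} (hmono : ∀ i, 1 ≤ i → i < T → θ i ≤ θ (i+1))
    (x : ℝ) (hx : ∀ i, 1 ≤ i → i ≤ T → x ≠ θ i) :
    ∀ r κ, 1 ≤ κ → κ + r + 1 ≤ T →
      HasDerivAt (Nspl θ (r+1) κ)
        ((r:ℝ) * (Nspl θ r κ x * (θ (κ+r) - θ κ)⁻¹
          - Nspl θ r (κ+1) x * (θ (κ+r+1) - θ (κ+1))⁻¹)) x := by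
  intro r
  induction r with
  | zero =>
    intro κ h1 h2
    have := (hasDerivAt_const x (Nspl θ 1 κ x)).congr_of_eventuallyEq
      (Nspl_one_eventuallyEq θ κ x (hx κ h1 (by omega)) (hx (κ+1) (by omega) (by omega)))
    simpa using this
  | succ r ih =>
    intro κ h1 h2
    have hA := ih κ h1 (by omega)
    have hB := ih (κ+1) (by omega) (by omega)
    have hw0 : HasDerivAt (omegaB θ (r+1) κ) (θ (κ+(r+1)) - θ κ)⁻¹ x :=
      omegaB_hasDerivAt θ (r+1) κ x (thle θ hmono h1 (by omega) (by omega))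
    have hw1 : HasDerivAt (omegaB θ (r+1) (κ+1)) (θ (κ+1+(r+1)) - θ (κ+1))⁻¹ x :=
      omegaB_hasDerivAt θ (r+1) (κ+1) x (thle θ hmono (by omega) (by omega) (by omega))
    have hbuilt := (hw0.mul hA).add (((hasDerivAt_const x (1:ℝ)).sub hw1).mul hB)
    have hshape : (fun y => omegaB θ (r+1) κ y * Nspl θ (r+1) κ y
        + (1 - omegaB θ (r+1) (κ+1) y) * Nspl θ (r+1) (κ+1) y) = Nspl θ (r+2) κ := rfl
    rw [show (omegaB θ (r+1) κ * Nspl θ (r+1) κ + ((fun _ => (1:ℝ)) - omegaB θ (r+1) (κ+1)) * Nspl θ (r+1) (κ+1)) = Nspl θ (r+2) κ from rfl] at hbuilt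
    have key : (θ (κ+(r+1)) - θ κ)⁻¹ * Nspl θ (r+1) κ x
          + omegaB θ (r+1) κ x * ((r:ℝ) * (Nspl θ r κ x * (θ (κ+r) - θ κ)⁻¹
              - Nspl θ r (κ+1) x * (θ (κ+r+1) - θ (κ+1))⁻¹))
        + ((0 - (θ (κ+1+(r+1)) - θ (κ+1))⁻¹) * Nspl θ (r+1) (κ+1) x
          + (1 - omegaB θ (r+1) (κ+1) x) * ((r:ℝ) * (Nspl θ r (κ+1) x * (θ (κ+1+r) - θ (κ+1))⁻¹
              - Nspl θ r (κ+1+1) x * (θ (κ+1+r+1) - θ (κ+1+1))⁻¹)))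
        = ((r+1 : ℕ):ℝ) * (Nspl θ (r+1) κ x * (θ (κ+(r+1)) - θ κ)⁻¹
            - Nspl θ (r+1) (κ+1) x * (θ (κ+(r+1)+1) - θ (κ+1))⁻¹) := by
      -- index normalizations
      try rw [show κ+1+(r+1) = κ+r+2 from by omega]
      try rw [show κ+(r+1)+1 = κ+r+2 from by omega]
      try rw [show κ+1+r+1 = κ+r+2 from by omega]
      try rw [show κ+(r+1) = κ+r+1 from by omega]
      try rw [show κ+1+r = κ+r+1 from by omega]
      try rw [show κ+1+1 = κ+2 from by omega]
      have c01 : θ κ ≤ θ (κ+1) := hmono κ h1 (by omega)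
      have c12 : θ (κ+1) ≤ θ (κ+2) := hmono (κ+1) (by omega) (by omega)
      have d0 : θ κ ≤ θ (κ+r) := thle θ hmono h1 (by omega) (by omega)
      have d1 : θ (κ+1) ≤ θ (κ+r+1) := thle θ hmono (by omega) (by omega) (by omega)
      have d2 : θ (κ+2) ≤ θ (κ+r+2) := thle θ hmono (by omega) (by omega) (by omega)
      have m0 : θ (κ+r) ≤ θ (κ+r+1) := hmono (κ+r) (by omega) (by omega)
      have m1 : θ (κ+r+1) ≤ θ (κ+r+2) := hmono (κ+r+1) (by omega) (by omega)
      have e1' : θ (κ+1) ≤ θ (κ+r) ∨ r = 0 := by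
        rcases Nat.eq_zero_or_pos r with h | h
        · exact Or.inr h
        · exact Or.inl (thle θ hmono (by omega) (by omega) (by omega))
      have e2' : θ (κ+2) ≤ θ (κ+r+1) ∨ r = 0 := by
        rcases Nat.eq_zero_or_pos r with h | h
        · exact Or.inr h
        · exact Or.inl (thle θ hmono (by omega) (by omega) (by omega))
      -- zero lemmas
      have hz : ∀ i, 1 ≤ i → i + r ≤ T → θ i = θ (i+r) → Nspl θ r i x = 0 := by
        intro i hi1 hi2 hie
        apply Nspl_zero θ hmono r i x hi1 hi2
        rcases lt_or_ge x (θ i) with h | h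
        · exact Or.inl h
        · refine Or.inr ?_
          rw [← hie]
          rcases eq_or_lt_of_le h with h' | h'
          · exact absurd h'.symm (hx i hi1 (by omega))
          · exact le_of_lt h'
      rcases Nat.eq_zero_or_pos r with hr0 | hr1
      · subst hr0
        simp only [Nspl, Nat.cast_zero, Nat.cast_one, zero_mul, mul_zero, zero_add, zero_sub,
          Nat.cast_ofNat]
        push_cast
        ring
      -- now r ≥ 1 : expand the recursion
      have hAe : Nspl θ (r+1) κ x = omegaB θ r κ x * Nspl θ r κ x
          + (1 - omegaB θ r (κ+1) x) * Nspl θ r (κ+1) x := by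
        cases r with
        | zero => omega
        | succ r' => rfl
      have hBe : Nspl θ (r+1) (κ+1) x = omegaB θ r (κ+1) x * Nspl θ r (κ+1) x
          + (1 - omegaB θ r (κ+1+1) x) * Nspl θ r (κ+1+1) x := by
        cases r with
        | zero => omega
        | succ r' => rfl
      rw [show κ+1+1 = κ+2 from by omega] at hBe
      have e1 : θ (κ+1) ≤ θ (κ+r) := e1'.resolve_right (by omega)
      have e2 : θ (κ+2) ≤ θ (κ+r+1) := e2'.resolve_right (by omega)
      simp only [show κ+1+r = κ+r+1 from by omega, show κ+1+1 = κ+2 from by omega] at *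
      rw [hAe, hBe]
      by_cases h0 : θ κ = θ (κ+r)
      · have ha0 : Nspl θ r κ x = 0 := hz κ h1 (by omega) h0
        have hwa : omegaB θ r κ x = 0 := omegaB_eq_zero θ (by rw [show κ+r = κ + r from rfl, ← h0]; exact lt_irrefl _) x
        by_cases h1' : θ (κ+1) = θ (κ+r+1)
        · -- Δ0 = 0 : everything left collapses
          have ha1 : Nspl θ r (κ+1) x = 0 := hz (κ+1) (by omega) (by omega)
            (by rw [show κ+1+r = κ+r+1 from by omega]; exact h1')
          have hW0 : omegaB θ (r+1) κ x = 0 := by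
            apply omegaB_eq_zero
            rw [show κ+(r+1) = κ+r+1 from by omega, ← h1']
            have : θ (κ+1) ≤ θ κ := by rw [h1']at c01 ⊢; linarith [h0 ▸ (e1)]
            exact not_lt.2 (le_trans (by linarith) (le_refl _))
          have hD0 : θ (κ+r+1) - θ κ = 0 := by
            have : θ κ = θ (κ+r+1) := by
              apply le_antisymm (le_trans d0 m0)
              calc θ (κ+r+1) = θ (κ+1) := h1'.symm
                _ ≤ θ (κ+r) := e1
                _ = θ κ := h0.symm
            rw [← this]; ring
          by_cases h2' : θ (κ+2) = θ (κ+r+2)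
          · -- everything degenerate
            have ha2 : Nspl θ r (κ+2) x = 0 := hz (κ+2) (by omega) (by omega)
              (by rw [show κ+2+r = κ+r+2 from by omega]; exact h2')
            have hW1 : omegaB θ (r+1) (κ+1) x = 0 := by
              apply omegaB_eq_zero
              rw [show κ+1+(r+1) = κ+r+2 from by omega, ← h2']
              exact not_lt.2 (by linarith)
            have hwb : omegaB θ r (κ+1) x = 0 := by
              apply omegaB_eq_zero
              rw [show κ+1+r = κ+r+1 from by omega, ← h1']
              exact lt_irrefl _
            rw [ha0, ha1, ha2, hW0, hW1, hD0, _root_.inv_zero]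
            push_cast
            ring
          · have hs2 : θ (κ+2) < θ (κ+r+2) := lt_of_le_of_ne d2 h2'
            have hΔ1 : θ (κ+r+2) - θ (κ+1) ≠ 0 := by
              have : θ (κ+1) ≤ θ (κ+2) := c12
              exact ne_of_gt (by linarith)
            have hδ2 : θ (κ+r+2) - θ (κ+2) ≠ 0 := ne_of_gt (by linarith)
            have hW1 : omegaB θ (r+1) (κ+1) x = (x - θ (κ+1))/(θ (κ+r+2) - θ (κ+1)) := by
              rw [omegaB_eq θ (by rw [show κ+1+(r+1) = κ+r+2 from by omega]; · exact lt_of_le_of_lt c12 hs2) x]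
              rw [show κ+1+(r+1) = κ+r+2 from by omega]
            have hw2 : omegaB θ r (κ+2) x = (x - θ (κ+2))/(θ (κ+r+2) - θ (κ+2)) := by
              rw [omegaB_eq θ (by rw [show κ+2+r = κ+r+2 from by omega]; exact hs2) x]
              rw [show κ+2+r = κ+r+2 from by omega]
            have hwb : omegaB θ r (κ+1) x = 0 := by
              apply omegaB_eq_zero
              rw [show κ+1+r = κ+r+1 from by omega, ← h1']
              exact lt_irrefl _
            rw [ha0, ha1, hW0, hW1, hw2, hwb, hD0, _root_.inv_zero]
            field_simp
            push_cast
            try ring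
        · -- h0 true, h1' false
          have hs1 : θ (κ+1) < θ (κ+r+1) := lt_of_le_of_ne d1 h1'
          have hΔ0 : θ (κ+r+1) - θ κ ≠ 0 := ne_of_gt (by linarith)
          have hδ1 : θ (κ+r+1) - θ (κ+1) ≠ 0 := ne_of_gt (by linarith)
          have hW0 : omegaB θ (r+1) κ x = (x - θ κ)/(θ (κ+r+1) - θ κ) := by
            rw [omegaB_eq θ (by rw [show κ+(r+1) = κ+r+1 from by omega]; exact lt_of_le_of_lt c01 hs1) x]
            rw [show κ+(r+1) = κ+r+1 from by omega]
          have hwb : omegaB θ r (κ+1) x = (x - θ (κ+1))/(θ (κ+r+1) - θ (κ+1)) := by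
            rw [omegaB_eq θ (by rw [show κ+1+r = κ+r+1 from by omega]; exact hs1) x]
            rw [show κ+1+r = κ+r+1 from by omega]
          by_cases h2' : θ (κ+2) = θ (κ+r+2)
          · have ha2 : Nspl θ r (κ+2) x = 0 := hz (κ+2) (by omega) (by omega)
              (by rw [show κ+2+r = κ+r+2 from by omega]; exact h2')
            have hΔ1 : θ (κ+r+2) - θ (κ+1) ≠ 0 := ne_of_gt (by linarith [h2' ▸ e2])
            have hW1 : omegaB θ (r+1) (κ+1) x = (x - θ (κ+1))/(θ (κ+r+2) - θ (κ+1)) := by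
              rw [omegaB_eq θ (by rw [show κ+1+(r+1) = κ+r+2 from by omega]; exact lt_of_lt_of_le hs1 m1) x]
              rw [show κ+1+(r+1) = κ+r+2 from by omega]
            rw [ha0, ha2, hW0, hW1, hwb]
            field_simp
            push_cast
            ring
          · have hs2 : θ (κ+2) < θ (κ+r+2) := lt_of_le_of_ne d2 h2'
            have hΔ1 : θ (κ+r+2) - θ (κ+1) ≠ 0 := ne_of_gt (by linarith)
            have hδ2 : θ (κ+r+2) - θ (κ+2) ≠ 0 := ne_of_gt (by linarith)
            have hW1 : omegaB θ (r+1) (κ+1) x = (x - θ (κ+1))/(θ (κ+r+2) - θ (κ+1)) := by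
              rw [omegaB_eq θ (by rw [show κ+1+(r+1) = κ+r+2 from by omega]; exact lt_of_lt_of_le hs1 m1) x]
              rw [show κ+1+(r+1) = κ+r+2 from by omega]
            have hw2 : omegaB θ r (κ+2) x = (x - θ (κ+2))/(θ (κ+r+2) - θ (κ+2)) := by
              rw [omegaB_eq θ (by rw [show κ+2+r = κ+r+2 from by omega]; exact hs2) x]
              rw [show κ+2+r = κ+r+2 from by omega]
            rw [ha0, hW0, hW1, hwb, hw2]
            field_simp
            push_cast
            ring
      · -- h0 false : δ0 > 0
        have hs0 : θ κ < θ (κ+r) := lt_of_le_of_ne d0 h0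
        have hδ0 : θ (κ+r) - θ κ ≠ 0 := ne_of_gt (by linarith)
        have hΔ0 : θ (κ+r+1) - θ κ ≠ 0 := ne_of_gt (by linarith)
        have hwa : omegaB θ r κ x = (x - θ κ)/(θ (κ+r) - θ κ) := omegaB_eq θ hs0 x
        have hW0 : omegaB θ (r+1) κ x = (x - θ κ)/(θ (κ+r+1) - θ κ) := by
          rw [omegaB_eq θ (by rw [show κ+(r+1) = κ+r+1 from by omega]; exact lt_of_lt_of_le hs0 m0) x]
          rw [show κ+(r+1) = κ+r+1 from by omega]
        by_cases h1' : θ (κ+1) = θ (κ+r+1)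
        · have ha1 : Nspl θ r (κ+1) x = 0 := hz (κ+1) (by omega) (by omega)
            (by rw [show κ+1+r = κ+r+1 from by omega]; exact h1')
          have hwb : omegaB θ r (κ+1) x = 0 := by
            apply omegaB_eq_zero
            rw [show κ+1+r = κ+r+1 from by omega, ← h1']
            exact lt_irrefl _
          by_cases h2' : θ (κ+2) = θ (κ+r+2)
          · -- B side fully degenerate : Δ1 = 0
            have ha2 : Nspl θ r (κ+2) x = 0 := hz (κ+2) (by omega) (by omega)
              (by rw [show κ+2+r = κ+r+2 from by omega]; exact h2')
            have hD1 : θ (κ+r+2) - θ (κ+1) = 0 := by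
              have l1 : θ (κ+1) = θ (κ+r+2) := by
                apply le_antisymm (by linarith)
                calc θ (κ+r+2) = θ (κ+2) := h2'.symm
                  _ ≤ θ (κ+r+1) := e2
                  _ = θ (κ+1) := h1'.symm
              rw [← l1]; ring
            have hW1 : omegaB θ (r+1) (κ+1) x = 0 := by
              apply omegaB_eq_zero
              rw [show κ+1+(r+1) = κ+r+2 from by omega, sub_eq_zero.mp hD1]
              exact lt_irrefl _
            rw [ha1, ha2, hwa, hwb, hW0, hW1, hD1, _root_.inv_zero]
            field_simp
            push_cast
            try ring
          · have hs2 : θ (κ+2) < θ (κ+r+2) := lt_of_le_of_ne d2 h2'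
            have hΔ1 : θ (κ+r+2) - θ (κ+1) ≠ 0 := ne_of_gt (by linarith)
            have hδ2 : θ (κ+r+2) - θ (κ+2) ≠ 0 := ne_of_gt (by linarith)
            have hW1 : omegaB θ (r+1) (κ+1) x = (x - θ (κ+1))/(θ (κ+r+2) - θ (κ+1)) := by
              rw [omegaB_eq θ (by rw [show κ+1+(r+1) = κ+r+2 from by omega]; exact lt_of_le_of_lt c12 hs2) x]
              rw [show κ+1+(r+1) = κ+r+2 from by omega]
            have hw2 : omegaB θ r (κ+2) x = (x - θ (κ+2))/(θ (κ+r+2) - θ (κ+2)) := by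
              rw [omegaB_eq θ (by rw [show κ+2+r = κ+r+2 from by omega]; exact hs2) x]
              rw [show κ+2+r = κ+r+2 from by omega]
            rw [ha1, hwa, hwb, hW0, hW1, hw2]
            field_simp
            push_cast
            ring
        · have hs1 : θ (κ+1) < θ (κ+r+1) := lt_of_le_of_ne d1 h1'
          have hδ1 : θ (κ+r+1) - θ (κ+1) ≠ 0 := ne_of_gt (by linarith)
          have hwb : omegaB θ r (κ+1) x = (x - θ (κ+1))/(θ (κ+r+1) - θ (κ+1)) := by
            rw [omegaB_eq θ (by rw [show κ+1+r = κ+r+1 from by omega]; exact hs1) x]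
            rw [show κ+1+r = κ+r+1 from by omega]
          have hW1g : θ (κ+1) < θ (κ+r+2) := lt_of_lt_of_le hs1 m1
          have hΔ1 : θ (κ+r+2) - θ (κ+1) ≠ 0 := ne_of_gt (by linarith)
          have hW1 : omegaB θ (r+1) (κ+1) x = (x - θ (κ+1))/(θ (κ+r+2) - θ (κ+1)) := by
            rw [omegaB_eq θ (by rw [show κ+1+(r+1) = κ+r+2 from by omega]; exact hW1g) x]
            rw [show κ+1+(r+1) = κ+r+2 from by omega]
          by_cases h2' : θ (κ+2) = θ (κ+r+2)
          · have ha2 : Nspl θ r (κ+2) x = 0 := hz (κ+2) (by omega) (by omega)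
              (by rw [show κ+2+r = κ+r+2 from by omega]; exact h2')
            rw [ha2, hwa, hwb, hW0, hW1]
            field_simp
            push_cast
            ring
          · have hs2 : θ (κ+2) < θ (κ+r+2) := lt_of_le_of_ne d2 h2'
            have hδ2 : θ (κ+r+2) - θ (κ+2) ≠ 0 := ne_of_gt (by linarith)
            have hw2 : omegaB θ r (κ+2) x = (x - θ (κ+2))/(θ (κ+r+2) - θ (κ+2)) := by
              rw [omegaB_eq θ (by rw [show κ+2+r = κ+r+2 from by omega]; exact hs2) x]
              rw [show κ+2+r = κ+r+2 from by omega]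
            rw [hwa, hwb, hW0, hW1, hw2]
            field_simp
            push_cast
            ring
    exact hbuilt.congr_deriv key

-- FTC allowing finitely many non-differentiability points
lemma ftc_finset (f f' : ℝ → ℝ) (s : Finset ℝ) :
    ∀ (a b : ℝ), a ≤ b → ContinuousOn f (Set.Icc a b) →
      (∀ x ∈ Set.Ioo a b, x ∉ s → HasDerivAt f (f' x) x) →
      IntervalIntegrable f' volume a b → ∫ y in a..b, f' y = f b - f a := by
  induction s using Finset.induction_on with
  | empty =>
    intro a b hab hcont hderiv hint
    exact intervalIntegral.integral_eq_sub_of_hasDeriv_right_of_le hab hcont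
      (fun x hx => (hderiv x hx (Finset.notMem_empty x)).hasDerivWithinAt) hint
  | @insert c s hc ih =>
    intro a b hab hcont hderiv hint
    by_cases hcm : c ∈ Set.Ioo a b
    · have hint1 : IntervalIntegrable f' volume a c :=
        hint.mono_set (Set.uIcc_subset_uIcc (by simp [Set.uIcc_of_le hab, hab])
          (by simp [Set.uIcc_of_le hab, hcm.1.le, hcm.2.le]))
      have hint2 : IntervalIntegrable f' volume c b :=
        hint.mono_set (Set.uIcc_subset_uIcc
          (by simp [Set.uIcc_of_le hab, hcm.1.le, hcm.2.le]) (by simp [Set.uIcc_of_le hab, hab]))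
      have h1 : ∫ y in a..c, f' y = f c - f a := by
        apply ih a c hcm.1.le (hcont.mono (Set.Icc_subset_Icc le_rfl hcm.2.le))
          ?_ hint1
        intro x hx hxs
        apply hderiv x ⟨hx.1, lt_trans hx.2 hcm.2⟩
        simp only [Finset.mem_insert, not_or]
        exact ⟨ne_of_lt hx.2, hxs⟩
      have h2 : ∫ y in c..b, f' y = f b - f c := by
        apply ih c b hcm.2.le (hcont.mono (Set.Icc_subset_Icc hcm.1.le le_rfl))
          ?_ hint2
        intro x hx hxs
        apply hderiv x ⟨lt_trans hcm.1 hx.1, hx.2⟩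
        simp only [Finset.mem_insert, not_or]
        exact ⟨ne_of_gt hx.1, hxs⟩
      rw [← intervalIntegral.integral_add_adjacent_intervals hint1 hint2, h1, h2]
      ring
    · apply ih a b hab hcont ?_ hint
      intro x hx hxs
      apply hderiv x hx
      simp only [Finset.mem_insert, not_or]
      exact ⟨fun he => hcm (he ▸ hx), hxs⟩

lemma Nspl_II (θ : ℕ → ℝ) {T : ℕ} (hmono : ∀ i, 1 ≤ i → i < T → θ i ≤ θ (i+1))
    (q r κ : ℕ) (h1 : 1 ≤ κ) (h2 : κ + r ≤ T) (a b : ℝ) :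
    IntervalIntegrable (fun y => y ^ q * Nspl θ r κ y) volume a b := by
  have hm : Measurable fun y : ℝ => y ^ q * Nspl θ r κ y :=
    (measurable_id.pow_const q).mul (Nspl_meas θ r κ)
  rw [intervalIntegrable_iff]
  refine MeasureTheory.Integrable.mono'
    (g := fun _ => (max |a| |b|) ^ q * 2 ^ r)
    (integrableOn_const measure_Ioc_lt_top.ne) hm.aestronglyMeasurable ?_
  filter_upwards [ae_restrict_mem measurableSet_Ioc] with y hy
  have hyb : |y| ≤ max |a| |b| := by
    rw [abs_le]
    constructor
    · have : -(max |a| |b|) ≤ min a b := le_min (by cases abs_cases a with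
        | inl h => nlinarith [le_max_left |a| |b|]
        | inr h => nlinarith [le_max_left |a| |b|])
        (by cases abs_cases b with
        | inl h => nlinarith [le_max_right |a| |b|]
        | inr h => nlinarith [le_max_right |a| |b|])
      linarith [hy.1]
    · calc y ≤ max a b := hy.2
        _ ≤ max |a| |b| := max_le_max (le_abs_self a) (le_abs_self b)
  calc ‖y ^ q * Nspl θ r κ y‖ = |y| ^ q * |Nspl θ r κ y| := by
        rw [Real.norm_eq_abs, abs_mul, abs_pow]
    _ ≤ (max |a| |b|) ^ q * 2 ^ r := by
        apply mul_le_mul (pow_le_pow_left₀ (abs_nonneg _) hyb q)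
          (Nspl_bound θ hmono r κ y h1 h2) (abs_nonneg _) (by positivity)

section Knot

variable {θ : ℕ → ℝ} {a b : ℝ} {m n : ℕ}
variable (hab : a < b) (hm : 2 ≤ m) (hmn : m ≤ n) (hθ : IsOpenKnot θ a b m n)

include hab hm hmn hθ

lemma theta_one : θ 1 = a := hθ.left 1 le_rfl (by omega)

lemma theta_top : θ (n+m) = b := hθ.right (n+m) (by omega) le_rfl

lemma a_lt_theta : a < θ (m+1) := by
  rcases Nat.eq_or_lt_of_le hmn with h | h
  · rw [hθ.right (m+1) (by omega) (by omega)]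
    exact hab
  · by_contra hc
    push_neg at hc
    have h1 : θ 1 ≤ θ (m+1) := thle θ hθ.mono le_rfl (by omega) (by omega)
    rw [theta_one hab hm hmn hθ] at h1
    have he : θ (m+1) = a := le_antisymm hc h1
    have hsub : Finset.Icc 1 (m+1) ⊆ (Finset.Icc 1 (n+m)).filter (fun i => θ i = θ (m+1)) := by
      intro i hi
      rw [Finset.mem_Icc] at hi
      rw [Finset.mem_filter, Finset.mem_Icc]
      refine ⟨⟨hi.1, by omega⟩, ?_⟩
      rw [he]
      rcases Nat.eq_or_lt_of_le hi.2 with h' | h'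
      · rw [h', he]
      · exact hθ.left i hi.1 (by omega)
    have hcard := Finset.card_le_card hsub
    rw [Nat.card_Icc] at hcard
    have := hθ.intMult (m+1) le_rfl (by omega)
    unfold knotMult at this
    omega

lemma no_run : ∀ i, 1 ≤ i → i + m ≤ n + m → θ i < θ (i+m) := by
  intro i hi1 hi2
  rcases lt_or_ge (θ i) (θ (i+m)) with h | h
  · exact h
  have heq : θ i = θ (i+m) := le_antisymm (thle θ hθ.mono hi1 (by omega) (by omega)) h
  exfalso
  by_cases hl : i + m ≤ n
  · -- interior knot with multiplicity ≥ m+1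
    have hsub : Finset.Icc i (i+m) ⊆ (Finset.Icc 1 (n+m)).filter (fun j => θ j = θ (i+m)) := by
      intro j hj
      rw [Finset.mem_Icc] at hj
      rw [Finset.mem_filter, Finset.mem_Icc]
      refine ⟨⟨by omega, by omega⟩, ?_⟩
      apply le_antisymm (thle θ hθ.mono (by omega) hj.2 (by omega))
      rw [← heq]
      exact thle θ hθ.mono hi1 hj.1 (by omega)
    have hcard := Finset.card_le_card hsub
    rw [Nat.card_Icc] at hcard
    have := hθ.intMult (i+m) (by omega) hl
    unfold knotMult at this
    omega
  · -- θ i = b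
    push_neg at hl
    have hb : θ (i+m) = b := hθ.right (i+m) (by omega) (by omega)
    have hib : θ i = b := by rw [heq, hb]
    by_cases him : i ≤ m
    · have : θ i = a := hθ.left i hi1 him
      rw [this] at hib
      exact absurd hib (ne_of_lt hab)
    · push_neg at him
      have hin : i ≤ n := by omega
      have hsub : insert i (Finset.Icc (n+1) (n+m)) ⊆
          (Finset.Icc 1 (n+m)).filter (fun j => θ j = θ i) := by
        intro j hj
        rw [Finset.mem_insert, Finset.mem_Icc] at hj
        rw [Finset.mem_filter, Finset.mem_Icc]
        rcases hj with hj | hj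
        · subst hj; exact ⟨⟨by omega, by omega⟩, rfl⟩
        · refine ⟨⟨by omega, hj.2⟩, ?_⟩
          rw [hθ.right j hj.1 hj.2, hib]
      have hcard := Finset.card_le_card hsub
      rw [Finset.card_insert_of_notMem (by rw [Finset.mem_Icc]; omega), Nat.card_Icc] at hcard
      have := hθ.intMult i (by omega) hin
      unfold knotMult at this
      omega

lemma Nspl_cont_high (r κ : ℕ) (hr : m + 1 ≤ r) (h1 : 1 ≤ κ) (h2 : κ + r ≤ n + m) :
    Continuous (Nspl θ r κ) := by
  obtain ⟨s, rfl⟩ : ∃ s, r = s + 1 := ⟨r - 1, by omega⟩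
  rw [continuous_iff_continuousAt]
  intro x
  apply Nspl_contAt θ hθ.mono s κ x h1 (by omega)
  · intro hrun
    exfalso
    have hl : θ (κ+m) ≤ θ (κ+s) := thle θ hθ.mono (by omega) (by omega) (by omega)
    have := no_run hab hm hmn hθ κ h1 (by omega)
    rw [hrun] at this
    linarith
  · intro hrun
    exfalso
    have hl : θ (κ+1+m) ≤ θ (κ+s+1) := thle θ hθ.mono (by omega) (by omega) (by omega)
    have := no_run hab hm hmn hθ (κ+1) (by omega) (by omega)
    rw [hrun] at this
    linarith

lemma Nspl_at_b (r κ : ℕ) (hr : 1 ≤ r) (h1 : 1 ≤ κ) (h2 : κ + r ≤ n + m) :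
    Nspl θ r κ b = 0 := by
  apply Nspl_zero θ hθ.mono r κ b h1 h2
  refine Or.inr ?_
  rw [← theta_top hab hm hmn hθ]
  exact thle θ hθ.mono (by omega) (by omega) le_rfl

lemma Nspl_at_a : ∀ s κ, 1 ≤ κ → κ + s + 1 ≤ n + m → a < θ (κ + s) →
    Nspl θ (s+1) κ a = 0 := by
  intro s
  induction s with
  | zero =>
    intro κ h1 h2 hlt
    simp only [Nspl]
    rw [if_neg]
    push_neg
    intro hcon
    exfalso
    simp only [Nat.add_zero] at hlt
    exact absurd hcon (not_le.2 hlt)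
  | succ s ih =>
    intro κ h1 h2 hlt
    show omegaB θ (s+1) κ a * Nspl θ (s+1) κ a
        + (1 - omegaB θ (s+1) (κ+1) a) * Nspl θ (s+1) (κ+1) a = 0
    have hsecond : Nspl θ (s+1) (κ+1) a = 0 := by
      apply ih (κ+1) (by omega) (by omega)
      rw [show κ+1+s = κ+s+1 from by omega]
      exact hlt
    have hfirst : omegaB θ (s+1) κ a * Nspl θ (s+1) κ a = 0 := by
      rcases lt_or_ge a (θ κ) with h | h
      · rw [Nspl_zero θ hθ.mono (s+1) κ a h1 (by omega) (Or.inl h), mul_zero]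
      · have : θ κ = a := by
          apply le_antisymm h
          rw [← theta_one hab hm hmn hθ]
          exact thle θ hθ.mono le_rfl h1 (by omega)
        rw [← this, omegaB_self, zero_mul]
    rw [hfirst, hsecond, mul_zero, add_zero]

end Knot

section KS

variable {θ : ℕ → ℝ} {a b : ℝ} {m n : ℕ}
variable (hab : a < b) (hm : 2 ≤ m) (hmn : m ≤ n) (hθ : IsOpenKnot θ a b m n)

include hab hm hmn hθ

lemma key_step (q ord κ : ℕ) (hord : m ≤ ord) (h1 : 1 ≤ κ) (h2 : κ + ord + 1 ≤ n + m) :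
    (ord:ℝ)/(θ (κ+ord) - θ κ) * (∫ y in a..b, y^q * Nspl θ ord κ y)
      - (ord:ℝ)/(θ (κ+1+ord) - θ (κ+1)) * (∫ y in a..b, y^q * Nspl θ ord (κ+1) y)
    = -(q:ℝ) * ∫ y in a..b, y^(q-1) * Nspl θ (ord+1) κ y := by
  set c0 : ℝ := (ord:ℝ) * (θ (κ+ord) - θ κ)⁻¹ with hc0
  set c1 : ℝ := (ord:ℝ) * (θ (κ+ord+1) - θ (κ+1))⁻¹ with hc1
  set F : ℝ → ℝ := fun y => y^q * Nspl θ (ord+1) κ y with hF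
  set F' : ℝ → ℝ := fun y => (q:ℝ) * (y^(q-1) * Nspl θ (ord+1) κ y)
      + (c0 * (y^q * Nspl θ ord κ y) - c1 * (y^q * Nspl θ ord (κ+1) y)) with hF'
  have hint1 : IntervalIntegrable (fun y => y^(q-1) * Nspl θ (ord+1) κ y) volume a b :=
    Nspl_II θ hθ.mono (q-1) (ord+1) κ h1 (by omega) a b
  have hint2 : IntervalIntegrable (fun y => y^q * Nspl θ ord κ y) volume a b :=
    Nspl_II θ hθ.mono q ord κ h1 (by omega) a b
  have hint3 : IntervalIntegrable (fun y => y^q * Nspl θ ord (κ+1) y) volume a b :=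
    Nspl_II θ hθ.mono q ord (κ+1) (by omega) (by omega) a b
  have hintF' : IntervalIntegrable F' volume a b :=
    (hint1.const_mul _).add ((hint2.const_mul _).sub (hint3.const_mul _))
  have hFTC : ∫ y in a..b, F' y = F b - F a := by
    apply ftc_finset F F' ((Finset.Icc 1 (n+m)).image θ) a b (le_of_lt hab)
    · exact ((continuous_pow q).mul
        (Nspl_cont_high hab hm hmn hθ (ord+1) κ (by omega) h1 (by omega))).continuousOn
    · intro x _ hxs
      have hx : ∀ i, 1 ≤ i → i ≤ n+m → x ≠ θ i := by
        intro i hi1 hi2 he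
        exact hxs (Finset.mem_image.mpr ⟨i, Finset.mem_Icc.mpr ⟨hi1, hi2⟩, he.symm⟩)
      have hd := (hasDerivAt_pow q x).mul
        (Nspl_hasDerivAt θ hθ.mono x hx ord κ h1 (by omega))
      have heq : ↑q * x ^ (q - 1) * Nspl θ (ord+1) κ x +
          x ^ q * ((ord:ℝ) * (Nspl θ ord κ x * (θ (κ+ord) - θ κ)⁻¹
            - Nspl θ ord (κ+1) x * (θ (κ+ord+1) - θ (κ+1))⁻¹)) = F' x := by
        rw [hF', hc0, hc1]; ring
      rw [heq] at hd
      exact hd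
    · exact hintF'
  have hFb : F b = 0 := by
    show b ^ q * Nspl θ (ord+1) κ b = 0
    rw [Nspl_at_b hab hm hmn hθ (ord+1) κ (by omega) h1 (by omega), mul_zero]
  have hFa : F a = 0 := by
    show a ^ q * Nspl θ (ord+1) κ a = 0
    have : a < θ (κ + ord) :=
      lt_of_lt_of_le (a_lt_theta hab hm hmn hθ) (thle θ hθ.mono (by omega) (by omega) (by omega))
    rw [Nspl_at_a hab hm hmn hθ ord κ h1 (by omega) this, mul_zero]
  rw [hFb, hFa, sub_zero] at hFTC
  have hsplit : ∫ y in a..b, F' y = (q:ℝ) * (∫ y in a..b, y^(q-1) * Nspl θ (ord+1) κ y)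
      + (c0 * (∫ y in a..b, y^q * Nspl θ ord κ y)
        - c1 * (∫ y in a..b, y^q * Nspl θ ord (κ+1) y)) := by
    rw [hF']
    rw [intervalIntegral.integral_add (hint1.const_mul _) ((hint2.const_mul _).sub (hint3.const_mul _)),
      intervalIntegral.integral_sub (hint2.const_mul _) (hint3.const_mul _),
      intervalIntegral.integral_const_mul, intervalIntegral.integral_const_mul,
      intervalIntegral.integral_const_mul]
  rw [hsplit] at hFTC
  have hidx : κ + 1 + ord = κ + ord + 1 := by omega
  rw [hidx]
  rw [div_eq_mul_inv, div_eq_mul_inv, ← hc0, ← hc1]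
  linarith [hFTC]

end KS

lemma Dmat_mulVec (θ : ℕ → ℝ) (ord p q' : ℕ) (v : Fin q' → ℝ) (k : Fin p)
    (hk : k.1 + 1 < q') :
    (Dmat θ ord p q' *ᵥ v) k
      = (ord:ℝ)/(θ (k.1+1+ord) - θ (k.1+1)) * v ⟨k.1, by omega⟩
        - (ord:ℝ)/(θ (k.1+2+ord) - θ (k.1+2)) * v ⟨k.1+1, by omega⟩ := by
  set k0 : Fin q' := ⟨k.1, by omega⟩ with hk0
  set k1 : Fin q' := ⟨k.1+1, by omega⟩ with hk1
  have hsummand : ∀ j : Fin q', Dmat θ ord p q' k j * v j =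
      (if j = k0 then ((ord:ℝ)/(θ (k.1+1+ord) - θ (k.1+1))) * v j else 0)
    + (if j = k1 then -(((ord:ℝ)/(θ (k.1+2+ord) - θ (k.1+2)))) * v j else 0) := by
    intro j
    simp only [Dmat, Matrix.of_apply]
    by_cases h1 : (j:ℕ) = k.1
    · have e0 : j = k0 := Fin.ext h1
      have e1 : j ≠ k1 := by
        intro hc
        have hv : (j:ℕ) = k.1+1 := by rw [hc]
        omega
      rw [if_pos h1, if_pos e0, if_neg e1]
      ring
    · have e0 : j ≠ k0 := fun hc => h1 (by rw [hc])
      rw [if_neg h1, if_neg e0]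
      by_cases h2 : (j:ℕ) = k.1 + 1
      · have e1 : j = k1 := Fin.ext h2
        rw [if_pos h2, if_pos e1]
        ring
      · have e1 : j ≠ k1 := by
          intro hc
          have hv : (j:ℕ) = k.1+1 := by rw [hc]
          omega
        rw [if_neg h2, if_neg e1]
        ring
  show (∑ j, Dmat θ ord p q' k j * v j) = _
  rw [Finset.sum_congr rfl (fun j _ => hsummand j), Finset.sum_add_distrib,
    Finset.sum_ite_eq' Finset.univ k0, Finset.sum_ite_eq' Finset.univ k1]
  simp only [Finset.mem_univ, if_pos]
  ring

section Chain

variable {θ : ℕ → ℝ} {a b : ℝ} {m n : ℕ}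
variable (hab : a < b) (hm : 2 ≤ m) (hmn : m ≤ n) (hθ : IsOpenKnot θ a b m n)

include hab hm hmn hθ

lemma chain (q : ℕ) : ∀ i,
    (Dprod θ m n i *ᵥ (fun j : Fin n => ∫ y in a..b, y^q * Nspl θ m (j.1+1) y))
    = fun k : Fin (n - i - 1) =>
        (∏ t ∈ Finset.range (i+1), -(((q - t : ℕ) : ℝ)))
          * ∫ y in a..b, y^(q - (i+1)) * Nspl θ (m+i+1) (k.1+1) y := by
  intro i
  induction i with
  | zero =>
    funext k
    show (Dmat θ m (n-1) n *ᵥ _) k = _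
    rw [Dmat_mulVec θ m (n-1) n _ k (by have := k.2; omega)]
    have hks := key_step hab hm hmn hθ q m (k.1+1) le_rfl (by omega) (by have := k.2; omega)
    rw [show k.1+2+m = k.1+1+1+m from by omega, show k.1+2 = k.1+1+1 from by omega]
    calc (m:ℝ)/(θ (k.1+1+m) - θ (k.1+1)) * (∫ y in a..b, y^q * Nspl θ m (k.1+1) y)
          - (m:ℝ)/(θ (k.1+1+1+m) - θ (k.1+1+1)) * (∫ y in a..b, y^q * Nspl θ m (k.1+1+1) y)
        = -((q:ℝ)) * ∫ y in a..b, y^(q-1) * Nspl θ (m+1) (k.1+1) y := hks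
      _ = (∏ t ∈ Finset.range 1, -(((q - t : ℕ) : ℝ)))
            * ∫ y in a..b, y^(q-1) * Nspl θ (m+0+1) (k.1+1) y := by
          rw [Finset.prod_range_one]
          norm_num
  | succ i ih =>
    funext k
    show ((Dmat θ (m+i+1) (n-(i+1)-1) (n-i-1) * Dprod θ m n i) *ᵥ _) k = _
    rw [← Matrix.mulVec_mulVec, ih]
    rw [Dmat_mulVec θ (m+i+1) (n-(i+1)-1) (n-i-1) _ k (by have := k.2; omega)]
    have hks := key_step hab hm hmn hθ (q-(i+1)) (m+i+1) (k.1+1) (by omega) (by omega)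
      (by have := k.2; omega)
    set C : ℝ := ∏ t ∈ Finset.range (i+1), -(((q - t : ℕ) : ℝ)) with hC
    show (↑(m+i+1))/(θ (k.1+1+(m+i+1)) - θ (k.1+1))
          * (C * ∫ y in a..b, y^(q-(i+1)) * Nspl θ (m+i+1) (k.1+1) y)
        - (↑(m+i+1))/(θ (k.1+2+(m+i+1)) - θ (k.1+2))
          * (C * ∫ y in a..b, y^(q-(i+1)) * Nspl θ (m+i+1) (k.1+1+1) y)
        = _
    rw [show k.1+2+(m+i+1) = k.1+1+1+(m+i+1) from by omega, show k.1+2 = k.1+1+1 from by omega]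
    calc (↑(m+i+1))/(θ (k.1+1+(m+i+1)) - θ (k.1+1))
          * (C * ∫ y in a..b, y^(q-(i+1)) * Nspl θ (m+i+1) (k.1+1) y)
        - (↑(m+i+1))/(θ (k.1+1+1+(m+i+1)) - θ (k.1+1+1))
          * (C * ∫ y in a..b, y^(q-(i+1)) * Nspl θ (m+i+1) (k.1+1+1) y)
        = C * ((↑(m+i+1))/(θ (k.1+1+(m+i+1)) - θ (k.1+1))
            * (∫ y in a..b, y^(q-(i+1)) * Nspl θ (m+i+1) (k.1+1) y)
          - (↑(m+i+1))/(θ (k.1+1+1+(m+i+1)) - θ (k.1+1+1))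
            * (∫ y in a..b, y^(q-(i+1)) * Nspl θ (m+i+1) (k.1+1+1) y)) := by ring
      _ = C * (-(((q-(i+1) : ℕ)):ℝ) * ∫ y in a..b, y^((q-(i+1))-1) * Nspl θ ((m+i+1)+1) (k.1+1) y) := by
          rw [hks]
      _ = (∏ t ∈ Finset.range (i+1+1), -(((q - t : ℕ) : ℝ)))
            * ∫ y in a..b, y^(q-(i+1+1)) * Nspl θ (m+(i+1)+1) (k.1+1) y := by
          rw [Finset.prod_range_succ, ← hC]
          rw [show q-(i+1+1) = (q-(i+1))-1 from by omega, show m+(i+1)+1 = (m+i+1)+1 from by omega]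
          ring

end Chain


set_option maxHeartbeats 1200000 in
theorem stmt16 (a b : ℝ) (hab : a < b) (m n : ℕ) (hm : 2 ≤ m) (hmn : m ≤ n)
    (θ : ℕ → ℝ) (hθ : IsOpenKnot θ a b m n)
    (g : Fin (n - m) → ℝ → ℝ)
    (hg : ∀ (k : Fin (n - m)) (y : ℝ),
      g k y = ∑ j : Fin n, DprodFull θ m n (by omega) k j * Nspl θ m (j.1 + 1) y) :
    (∀ k : Fin (n - m), ∀ ν : ℕ, ν ≤ m - 1 → (∫ y in a..b, y ^ ν * g k y) = 0)
    ∧ (∀ k : Fin (n - m), ∀ p : Polynomial ℝ, p.natDegree ≤ m - 1 →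
        (∫ y in a..b, Polynomial.eval y p * g k y) = 0) := by
  have h1m : 1 ≤ m := by omega
  replace hg : ∀ (k : Fin (n - m)) (y : ℝ),
      g k y = ∑ j : Fin n, DprodFull θ m n h1m k j * Nspl θ m (j.1 + 1) y := by
    intro k y
    rw [hg k y]
  have part1 : ∀ k : Fin (n - m), ∀ ν : ℕ, ν ≤ m - 1 →
      (∫ y in a..b, y ^ ν * g k y) = 0 := by
    intro k ν hν
    have hfun : (fun y => y ^ ν * g k y)
        = fun y => ∑ j : Fin n, DprodFull θ m n h1m k j
            * (y ^ ν * Nspl θ m (j.1 + 1) y) := by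
      funext y
      rw [hg k y, Finset.mul_sum]
      exact Finset.sum_congr rfl fun j _ => by ring
    rw [hfun]
    rw [intervalIntegral.integral_finset_sum (μ := volume)
      (f := fun (j : Fin n) (y : ℝ) => DprodFull θ m n h1m k j
          * (y ^ ν * Nspl θ m (j.1 + 1) y))
      (fun j _ =>
        (Nspl_II θ hθ.mono ν m (j.1+1) (by omega) (by have := j.2; omega) a b).const_mul _)]
    have hcm : ∀ j : Fin n, (∫ y in a..b,
          DprodFull θ m n h1m k j * (y ^ ν * Nspl θ m (j.1 + 1) y))
        = DprodFull θ m n h1m k j * ∫ y in a..b, y ^ ν * Nspl θ m (j.1 + 1) y :=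
      fun j => intervalIntegral.integral_const_mul _ _
    rw [Finset.sum_congr rfl (fun j _ => hcm j)]
    set μ : Fin n → ℝ := fun j : Fin n => ∫ y in a..b, y ^ ν * Nspl θ m (j.1 + 1) y with hμ
    set k' : Fin (n - (m-1) - 1) :=
      (finCongr (by omega : n - (m-1) - 1 = n - m)).symm k with hk'
    have hre : ∑ j : Fin n, DprodFull θ m n h1m k j * μ j
        = (Dprod θ m n (m-1) *ᵥ μ) k' := by
      show _ = ∑ j : Fin n, Dprod θ m n (m-1) k' j * μ j
      apply Finset.sum_congr rfl
      intro j _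
      congr 1
    rw [hre, chain hab hm hmn hθ ν (m-1)]
    show (∏ t ∈ Finset.range ((m-1)+1), -(((ν - t : ℕ) : ℝ)))
        * (∫ y in a..b, y ^ (ν - ((m-1)+1)) * Nspl θ (m+(m-1)+1) (k'.1+1) y) = 0
    have hzero : (∏ t ∈ Finset.range ((m-1)+1), -(((ν - t : ℕ) : ℝ))) = 0 := by
      apply Finset.prod_eq_zero (Finset.mem_range.mpr (by omega : ν < (m-1)+1))
      rw [Nat.sub_self]
      norm_num
    rw [hzero, zero_mul]
  refine ⟨part1, ?_⟩
  intro k p hp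
  have hdeg : p.natDegree < m := by omega
  have hfun : (fun y => Polynomial.eval y p * g k y)
      = fun y => ∑ i ∈ Finset.range m, p.coeff i * (y ^ i * g k y) := by
    funext y
    rw [Polynomial.eval_eq_sum_range' hdeg y, Finset.sum_mul]
    exact Finset.sum_congr rfl fun i _ => by ring
  have hgint : ∀ i : ℕ, IntervalIntegrable (fun y => y ^ i * g k y) volume a b := by
    intro i
    have hrw : (fun y => y ^ i * g k y)
        = fun y => ∑ j : Fin n, DprodFull θ m n h1m k j
            * (y ^ i * Nspl θ m (j.1 + 1) y) := by
      funext y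
      rw [hg k y, Finset.mul_sum]
      exact Finset.sum_congr rfl fun j _ => by ring
    rw [hrw]
    have hsum := IntervalIntegrable.sum (μ := volume) (a := a) (b := b) Finset.univ
      (f := fun (j : Fin n) => fun y => DprodFull θ m n h1m k j
          * (y ^ i * Nspl θ m (j.1 + 1) y))
      (fun j _ => (Nspl_II θ hθ.mono i m (j.1+1) (by omega) (by have := j.2; omega) a b).const_mul _)
    have heq : (∑ j : Fin n, fun y => DprodFull θ m n h1m k j
        * (y ^ i * Nspl θ m (j.1 + 1) y))
        = fun y => ∑ j : Fin n, DprodFull θ m n h1m k j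
            * (y ^ i * Nspl θ m (j.1 + 1) y) := by
      funext y
      simp [Finset.sum_apply]
    rwa [heq] at hsum
  rw [hfun]
  rw [intervalIntegral.integral_finset_sum (μ := volume)
    (f := fun (i : ℕ) (y : ℝ) => p.coeff i * (y ^ i * g k y))
    (fun i _ => (hgint i).const_mul _)]
  apply Finset.sum_eq_zero
  intro i hi
  rw [intervalIntegral.integral_const_mul, part1 k i (by
    rw [Finset.mem_range] at hi; omega), mul_zero]
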